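/- Under the assumptions of the weighted trace-penalty model, every stationary point X̂ has the form X̂ = Û_p Ŝ_p, where the columns û_i of Û_p are orthonormal eigenvectors of A with eigenvalues σ_i, and Ŝ_p = diag(ŝ₁,…,ŝ_p) with each ŝ_i ∈ {0, √(w_i − σ_i/μ)}. -/

import Mathlib

open Matrix

set_option maxHeartbeats 1000000 in
/-- Every stationary point of the weighted trace-penalty objective
has the form `X̂ = Û_p Ŝ_p` with orthonormal eigenvector columns and
`ŝ_i ∈ {0, √(w_i − σ_i/μ)}`. -/
theorem stmt_2 {n p : ℕ} (hpn : p < n)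
    (A : Matrix (Fin n) (Fin n) ℝ) (hA : A.IsSymm)
    (V : Matrix (Fin n) (Fin n) ℝ) (hV : Vᵀ * V = 1)
    (lam : Fin n → ℝ) (hAV : A = V * Matrix.diagonal lam * Vᵀ)
    (hmono : Monotone lam)
    (hstrict : ∀ i j : Fin n, i < j → (j : ℕ) ≤ p → lam i < lam j)
    (μ : ℝ) (hμ : 0 < μ)
    (w : Fin p → ℝ) (hwanti : StrictAnti w)
    (hwlam : ∀ i : Fin p, lam (Fin.castLE hpn.le i) / μ < w i)
    (X : Matrix (Fin n) (Fin p) ℝ)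
    (hstat : A * X + μ • (X * (Xᵀ * X - Matrix.diagonal w)) = 0) :
    ∃ (U : Matrix (Fin n) (Fin p) ℝ) (σ s : Fin p → ℝ),
      (∀ i : Fin p, A *ᵥ (fun k => U k i) = σ i • (fun k => U k i)) ∧
      Uᵀ * U = 1 ∧
      (∀ i : Fin p, s i = 0 ∨ s i = Real.sqrt (w i - σ i / μ)) ∧
      X = U * Matrix.diagonal s := by
  classical
  rcases Nat.eq_zero_or_pos p with hp0 | hp
  · subst hp0
    refine ⟨0, 0, 0, fun i => i.elim0, ?_, fun i => i.elim0, ?_⟩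
    · ext i j; exact i.elim0
    · ext k j; exact j.elim0
  -- setup
  have hVVt : V * Vᵀ = 1 := mul_eq_one_comm.mp hV
  set Y : Matrix (Fin n) (Fin p) ℝ := Vᵀ * X with hYdef
  have hXVY : X = V * Y := by
    rw [hYdef, ← Matrix.mul_assoc, hVVt, Matrix.one_mul]
  have hYtY : Yᵀ * Y = Xᵀ * X := by
    rw [hYdef, Matrix.transpose_mul, Matrix.transpose_transpose, Matrix.mul_assoc,
      ← Matrix.mul_assoc V, hVVt, Matrix.one_mul]
  -- stationarity in Y coordinates
  have hY : Matrix.diagonal lam * Y + μ • (Y * (Yᵀ * Y - Matrix.diagonal w)) = 0 := by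
    have h := congrArg (fun M => Vᵀ * M) hstat
    simp only [Matrix.mul_add, Matrix.mul_smul, Matrix.mul_zero] at h
    rw [hAV] at h
    rw [hYtY]
    calc Matrix.diagonal lam * Y + μ • (Y * (Xᵀ * X - Matrix.diagonal w))
        = Vᵀ * (V * Matrix.diagonal lam * Vᵀ * X) +
            μ • (Vᵀ * (X * (Xᵀ * X - Matrix.diagonal w))) := by
          rw [hYdef]
          congr 1
          · rw [Matrix.mul_assoc V, ← Matrix.mul_assoc Vᵀ, ← Matrix.mul_assoc Vᵀ, hV,
              Matrix.one_mul, Matrix.mul_assoc]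
          · rw [← Matrix.mul_assoc]
      _ = 0 := h
  set D : Matrix (Fin p) (Fin p) ℝ := Yᵀ * Y with hDdef
  set d : Fin p → ℝ := fun j => D j j with hddef
  -- D commutes with diagonal w, hence is diagonal
  have hM : Yᵀ * (Matrix.diagonal lam * Y) + μ • (D * (D - Matrix.diagonal w)) = 0 := by
    have h := congrArg (fun M => Yᵀ * M) hY
    simp only [Matrix.mul_add, Matrix.mul_smul, Matrix.mul_zero] at h
    rw [← Matrix.mul_assoc Yᵀ Y] at h
    exact h
  have hDt : Dᵀ = D := by rw [hDdef, Matrix.transpose_mul, Matrix.transpose_transpose]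
  have hDW : Matrix.diagonal w * D = D * Matrix.diagonal w := by
    have hsymm : (Yᵀ * (Matrix.diagonal lam * Y))ᵀ = Yᵀ * (Matrix.diagonal lam * Y) := by
      rw [Matrix.transpose_mul, Matrix.transpose_mul, Matrix.transpose_transpose,
        Matrix.diagonal_transpose, Matrix.mul_assoc]
    have h3 : μ • (D * (D - Matrix.diagonal w)) = -(Yᵀ * (Matrix.diagonal lam * Y)) := by
      have hM' := hM
      rw [add_comm] at hM'
      exact eq_neg_of_add_eq_zero_left hM' 
    have h4 : (μ • (D * (D - Matrix.diagonal w)))ᵀ = μ • (D * (D - Matrix.diagonal w)) := by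
      rw [h3, Matrix.transpose_neg, hsymm]
    rw [Matrix.transpose_smul] at h4
    have hS := smul_right_injective (Matrix (Fin p) (Fin p) ℝ) (ne_of_gt hμ) h4
    rw [Matrix.transpose_mul, Matrix.transpose_sub, hDt, Matrix.diagonal_transpose,
      Matrix.sub_mul, Matrix.mul_sub] at hS
    exact sub_right_injective hS
  have hDoff : ∀ i j : Fin p, i ≠ j → D i j = 0 := by
    intro i j hij
    have h := congrFun (congrFun hDW i) j
    rw [Matrix.mul_diagonal, Matrix.diagonal_mul] at h
    have hw : w i ≠ w j := hwanti.injective.ne hij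
    rcases lt_trichotomy i j with h' | h' | h'
    · nlinarith [hwanti h', sq_nonneg (D i j)]
    · exact absurd h' hij
    · nlinarith [hwanti h', sq_nonneg (D i j)]
  -- key entrywise relation
  have hkey : ∀ (k : Fin n) (j : Fin p), Y k j = 0 ∨ lam k = μ * (w j - d j) := by
    intro k j
    have h := congrFun (congrFun hY k) j
    simp only [Matrix.add_apply, Matrix.smul_apply, Matrix.zero_apply, smul_eq_mul] at h
    have hsum : ∑ m, Y k m * (D - Matrix.diagonal w) m j = Y k j * (d j - w j) := by
      rw [Finset.sum_eq_single j]
      · simp [hddef, Matrix.sub_apply, Matrix.diagonal_apply_eq]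
      · intro m _ hm
        have hz : D m j = 0 := hDoff m j hm
        simp [Matrix.sub_apply, Matrix.diagonal_apply_ne _ hm, hz]
      · simp
    rw [Matrix.diagonal_mul, Matrix.mul_apply, hsum] at h
    have h6 : Y k j * (lam k - μ * (w j - d j)) = 0 := by linear_combination h
    rcases mul_eq_zero.mp h6 with h7 | h7
    · exact Or.inl h7
    · exact Or.inr (by linarith)
  have hdsum : ∀ j, d j = ∑ k, Y k j * Y k j := by
    intro j
    simp [hddef, hDdef, Matrix.mul_apply, Matrix.transpose_apply]
  have horth : ∀ i j : Fin p, i ≠ j → ∑ k, Y k i * Y k j = 0 := by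
    intro i j hij
    have := hDoff i j hij
    simpa [hDdef, Matrix.mul_apply, Matrix.transpose_apply] using this
  have hdnonneg : ∀ j, 0 ≤ d j := by
    intro j; rw [hdsum]; exact Finset.sum_nonneg fun k _ => mul_self_nonneg _
  -- zero-column predicate
  set Zc : Fin p → Prop := fun j => ∀ k, Y k j = 0 with hZcdef
  have hdpos : ∀ j, ¬ Zc j → 0 < d j := by
    intro j hj
    simp only [hZcdef, not_forall] at hj
    obtain ⟨k, hk⟩ := hj
    rw [hdsum]
    exact Finset.sum_pos' (fun k _ => mul_self_nonneg _) ⟨k, Finset.mem_univ k, mul_self_pos.mpr hk⟩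
  -- counting: zero low rows are at least as many as zero columns
  set NZ : Finset (Fin p) := Finset.univ.filter (fun j => ¬ Zc j) with hNZdef
  set Zcols : Finset (Fin p) := Finset.univ.filter Zc with hZcolsdef
  set ZRlow : Finset (Fin n) :=
    Finset.univ.filter (fun k : Fin n => (k : ℕ) < p ∧ ∀ j, Y k j = 0) with hZRdef
  set Tlow : Finset (Fin n) :=
    Finset.univ.filter (fun k : Fin n => (k : ℕ) < p ∧ ¬ ∀ j, Y k j = 0) with hTdef
  have j₀ : Fin p := ⟨0, hp⟩
  have hTcard : Tlow.card ≤ NZ.card := by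
    have hf : ∀ k : Fin n, (¬ ∀ j, Y k j = 0) → ∃ j, Y k j ≠ 0 := by
      intro k hk; push_neg at hk; exact hk
    set f : Fin n → Fin p := fun k =>
      if h : ∃ j, Y k j ≠ 0 then h.choose else j₀ with hfdef
    apply Finset.card_le_card_of_injOn f
    · intro k hk
      obtain ⟨-, -, hk2⟩ := Finset.mem_filter.mp hk
      have h := hf k hk2
      refine Finset.mem_filter.mpr ⟨Finset.mem_univ _, ?_⟩
      intro hz
      have : f k = h.choose := by rw [hfdef]; exact dif_pos h
      exact h.choose_spec (by rw [← this]; exact hz k)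
    · intro k1 hk1 k2 hk2 hfk
      by_contra hne
      obtain ⟨-, hk1p, hk1z⟩ := Finset.mem_filter.mp hk1
      obtain ⟨-, hk2p, hk2z⟩ := Finset.mem_filter.mp hk2
      have h1 := hf k1 hk1z
      have h2 := hf k2 hk2z
      have e1 : f k1 = h1.choose := by rw [hfdef]; exact dif_pos h1
      have e2 : f k2 = h2.choose := by rw [hfdef]; exact dif_pos h2
      have hy1 : Y k1 (f k1) ≠ 0 := by rw [e1]; exact h1.choose_spec
      have hy2 : Y k2 (f k1) ≠ 0 := by rw [hfk, e2]; exact h2.choose_spec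
      have hl1 : lam k1 = μ * (w (f k1) - d (f k1)) := (hkey k1 (f k1)).resolve_left hy1
      have hl2 : lam k2 = μ * (w (f k1) - d (f k1)) := (hkey k2 (f k1)).resolve_left hy2
      have hll : lam k1 = lam k2 := by rw [hl1, hl2]
      rcases lt_trichotomy k1 k2 with h' | h' | h'
      · exact absurd hll (ne_of_lt (hstrict k1 k2 h' (le_of_lt hk2p)))
      · exact hne h'
      · exact absurd hll.symm (ne_of_lt (hstrict k2 k1 h' (le_of_lt hk1p)))
  have hZcard : Zcols.card ≤ ZRlow.card := by
    have h1 : NZ.card + Zcols.card = p := by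
      have := Finset.card_filter_add_card_filter_not (s := (Finset.univ : Finset (Fin p))) Zc
      simp only [Finset.card_univ, Fintype.card_fin] at this
      rw [hNZdef, hZcolsdef]; omega
    have h2 : ZRlow.card + Tlow.card = p := by
      set Low : Finset (Fin n) := Finset.univ.filter (fun k : Fin n => (k : ℕ) < p) with hLdef
      have hLcard : Low.card = p := by
        have himg : Low = Finset.univ.image (Fin.castLE hpn.le) := by
          ext k
          simp only [hLdef, Finset.mem_filter, Finset.mem_univ, true_and, Finset.mem_image]
          constructor
          · intro hk; exact ⟨⟨k, hk⟩, Fin.ext rfl⟩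
          · rintro ⟨i, rfl⟩; exact i.isLt
        rw [himg, Finset.card_image_of_injective _ (Fin.castLE_injective _), Finset.card_univ,
          Fintype.card_fin]
      have hsplit := Finset.card_filter_add_card_filter_not
        (s := Low) (fun k : Fin n => ∀ j, Y k j = 0)
      have e1 : Low.filter (fun k => ∀ j, Y k j = 0) = ZRlow := by
        rw [hLdef, hZRdef, Finset.filter_filter]
      have e2 : Low.filter (fun k => ¬ ∀ j, Y k j = 0) = Tlow := by
        rw [hLdef, hTdef, Finset.filter_filter]
      rw [e1, e2, hLcard] at hsplit
      omega
    omega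
  -- embedding from zero columns into low zero rows
  have hemb : Nonempty ((Zcols : Finset (Fin p)) ↪ (ZRlow : Finset (Fin n))) := by
    rw [Function.Embedding.nonempty_iff_card_le, Fintype.card_coe, Fintype.card_coe]
    exact hZcard
  obtain ⟨e⟩ := hemb
  set ψ : Fin p → Fin n := fun j =>
    if h : Zc j then (e ⟨j, Finset.mem_filter.mpr ⟨Finset.mem_univ _, h⟩⟩ : Fin n)
    else ⟨0, hp.trans hpn⟩ with hψdef
  have hψZR : ∀ j (h : Zc j), ∀ j', Y (ψ j) j' = 0 := by
    intro j h j'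
    have : ψ j = (e ⟨j, Finset.mem_filter.mpr ⟨Finset.mem_univ _, h⟩⟩ : Fin n) := by
      simp only [hψdef]; exact dif_pos h
    rw [this]
    have hm := Finset.mem_filter.mp (e ⟨j, Finset.mem_filter.mpr ⟨Finset.mem_univ _, h⟩⟩).2
    exact hm.2.2 j'
  have hψinj : ∀ j1 j2, Zc j1 → Zc j2 → ψ j1 = ψ j2 → j1 = j2 := by
    intro j1 j2 h1 h2 hψ
    have e1 : ψ j1 = (e ⟨j1, Finset.mem_filter.mpr ⟨Finset.mem_univ _, h1⟩⟩ : Fin n) := by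
      simp only [hψdef]; exact dif_pos h1
    have e2 : ψ j2 = (e ⟨j2, Finset.mem_filter.mpr ⟨Finset.mem_univ _, h2⟩⟩ : Fin n) := by
      simp only [hψdef]; exact dif_pos h2
    rw [e1, e2] at hψ
    exact Subtype.mk_eq_mk.mp (e.injective (Subtype.ext hψ))
  -- the construction
  set σf : Fin p → ℝ := fun j => if Zc j then lam (ψ j) else μ * (w j - d j) with hσdef
  set sf : Fin p → ℝ := fun j => if Zc j then 0 else Real.sqrt (d j) with hsdef
  set Yn : Matrix (Fin n) (Fin p) ℝ :=
    fun k j => if Zc j then (if k = ψ j then 1 else 0) else Y k j / Real.sqrt (d j) with hYndef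
  refine ⟨V * Yn, σf, sf, ?_, ?_, ?_, ?_⟩
  · -- eigenvector property
    intro i
    have hcol : (fun k => (V * Yn) k i) = V *ᵥ (fun k => Yn k i) := by
      funext k; simp [Matrix.mul_apply, Matrix.mulVec, dotProduct]
    have hΛ : Matrix.diagonal lam *ᵥ (fun k => Yn k i) = σf i • (fun k => Yn k i) := by
      funext k
      have hdv : (Matrix.diagonal lam *ᵥ fun k' => Yn k' i) k = lam k * Yn k i := by
        simp [Matrix.mulVec, dotProduct, Matrix.diagonal_apply, ite_mul, zero_mul]
      rw [hdv]
      simp only [Pi.smul_apply, smul_eq_mul]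
      by_cases hz : Zc i
      · simp only [hYndef, hσdef, if_pos hz]
        by_cases hk : k = ψ i
        · simp [hk]
        · simp [hk]
      · simp only [hYndef, hσdef, if_neg hz]
        rcases hkey k i with h0 | hl
        · simp [h0]
        · rw [hl]
    have hAV2 : A * V = V * Matrix.diagonal lam := by
      rw [hAV, Matrix.mul_assoc (V * Matrix.diagonal lam) Vᵀ V, hV, Matrix.mul_one]
    rw [hcol]
    calc A *ᵥ (V *ᵥ fun k => Yn k i) = (A * V) *ᵥ (fun k => Yn k i) :=
          Matrix.mulVec_mulVec _ _ _
      _ = (V * Matrix.diagonal lam) *ᵥ (fun k => Yn k i) := by rw [hAV2]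
      _ = V *ᵥ (Matrix.diagonal lam *ᵥ fun k => Yn k i) := (Matrix.mulVec_mulVec _ _ _).symm
      _ = V *ᵥ (σf i • fun k => Yn k i) := by rw [hΛ]
      _ = σf i • (V *ᵥ fun k => Yn k i) := Matrix.mulVec_smul _ _ _
  · -- orthonormality
    have hVY : (V * Yn)ᵀ * (V * Yn) = Ynᵀ * Yn := by
      rw [Matrix.transpose_mul, Matrix.mul_assoc, ← Matrix.mul_assoc Vᵀ V Yn, hV,
        Matrix.one_mul]
    rw [hVY]
    ext i j
    rw [Matrix.mul_apply, Matrix.one_apply]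
    simp only [Matrix.transpose_apply]
    simp only [hYndef]
    by_cases hi : Zc i <;> by_cases hj : Zc j
    · simp only [if_pos hi, if_pos hj, ite_mul, one_mul, zero_mul]
      rw [Finset.sum_ite_eq']
      by_cases hij : i = j
      · subst hij; simp
      · have hne : ψ i ≠ ψ j := fun hc => hij (hψinj _ _ hi hj hc)
        simp [hne, hij]
    · have hij : i ≠ j := fun h => hj (h ▸ hi)
      simp only [if_pos hi, if_neg hj, ite_mul, one_mul, zero_mul]
      rw [Finset.sum_ite_eq']
      simp [hψZR i hi j, hij]
    · have hij : i ≠ j := fun h => hi (h ▸ hj)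
      simp only [if_neg hi, if_pos hj, mul_ite, mul_one, mul_zero]
      rw [Finset.sum_ite_eq']
      simp [hψZR j hj i, hij]
    · simp only [if_neg hi, if_neg hj]
      have hterm : ∀ k : Fin n, Y k i / Real.sqrt (d i) * (Y k j / Real.sqrt (d j))
          = Y k i * Y k j / (Real.sqrt (d i) * Real.sqrt (d j)) := fun k =>
        div_mul_div_comm _ _ _ _
      rw [Finset.sum_congr rfl (fun k _ => hterm k), ← Finset.sum_div]
      by_cases hij : i = j
      · subst hij
        rw [← hdsum i, Real.mul_self_sqrt (hdnonneg i), div_self (ne_of_gt (hdpos i hi))]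
        simp
      · rw [horth i j hij]
        simp [hij]
  · -- the s values
    intro i
    by_cases hz : Zc i
    · left; simp [hsdef, if_pos hz]
    · right
      simp only [hsdef, hσdef, if_neg hz]
      have harith : w i - μ * (w i - d i) / μ = d i := by
        field_simp
        ring
      rw [harith]
  · -- the factorization
    have hYeq : Y = Yn * Matrix.diagonal sf := by
      ext k j
      rw [Matrix.mul_diagonal]
      by_cases hz : Zc j
      · simp [hYndef, hsdef, if_pos hz, hz k]
      · simp only [hYndef, hsdef, if_neg hz]
        rw [div_mul_cancel₀]
        exact Real.sqrt_ne_zero'.mpr (hdpos j hz)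
    rw [Matrix.mul_assoc, ← hYeq]
    exact hXVY
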